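/- Let D₁ and D₂ be domains in ℂ with nonempty intersection such that D₁ ∪ D₂ is simply connected. Then the sets P_y(D₁), P_y(D₂) and P_y(D₁ ∩ D₂) are each nonempty open intervals in ℝ (i.e., open connected subsets of ℝ). -/

import Mathlib

open Complex Set Metric

/-- Projection of a planar set onto the imaginary axis. -/
def Py (D : Set ℂ) : Set ℝ := {a : ℝ | ∃ z ∈ D, z.im = a}

/-- `Λ_y(D)`: imaginary parts `a` such that the horizontal slice of `D` at height `a`
is nonempty and connected. -/
def Ly (D : Set ℂ) : Set ℝ := {a : ℝ | IsConnected (D ∩ {z : ℂ | z.im = a})}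

/-- Convexity in the direction of the real axis. -/
def CvxRe (D : Set ℂ) : Prop :=
  ∀ z ∈ D, ∀ w ∈ D, z.im = w.im → segment ℝ z w ⊆ D

/-- Local injectivity of `q` on `S`. -/
def LocInjOn (q : ℂ → ℂ) (S : Set ℂ) : Prop :=
  ∀ z ∈ S, ∃ U ∈ nhdsWithin z S, Set.InjOn q U
noncomputable def argA (w : ℂ) : ℝ := Complex.arg (Complex.I * w) - Real.pi / 2
noncomputable def argB (w : ℂ) : ℝ := Complex.arg (-Complex.I * w) + Real.pi / 2

lemma exp_arg_eq (z : ℂ) (h : z ≠ 0) :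
    Complex.exp (Complex.arg z * Complex.I) = z / ‖z‖ := by
  rw [eq_div_iff (by simpa using norm_ne_zero_iff.mpr h), mul_comm]
  exact_mod_cast Complex.norm_mul_exp_arg_mul_I z

lemma exp_argA (w : ℂ) (h : w ≠ 0) :
    Complex.exp ((argA w : ℝ) * Complex.I) = w / ‖w‖ := by
  have hIw : Complex.I * w ≠ 0 := by simp [h]
  have e1 : ((argA w : ℝ) : ℂ) * Complex.I
      = Complex.arg (Complex.I * w) * Complex.I + (-(Real.pi/2 : ℝ)) * Complex.I := by
    unfold argA; push_cast; ring
  rw [e1, Complex.exp_add, exp_arg_eq _ hIw]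
  have h2 : Complex.exp (-(Real.pi/2 : ℝ) * Complex.I) = -Complex.I := by
    rw [Complex.exp_mul_I]; push_cast
    rw [Complex.cos_neg, Complex.sin_neg, Complex.cos_pi_div_two, Complex.sin_pi_div_two]; ring
  rw [h2, norm_mul]
  simp only [Complex.norm_I, one_mul]
  have hI2 : Complex.I * Complex.I = -1 := Complex.I_mul_I
  field_simp
  ring_nf
  rw [Complex.I_sq]
  ring

lemma exp_argB (w : ℂ) (h : w ≠ 0) :
    Complex.exp ((argB w : ℝ) * Complex.I) = w / ‖w‖ := by
  have hIw : -Complex.I * w ≠ 0 := by simp [h]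
  have e1 : ((argB w : ℝ) : ℂ) * Complex.I
      = Complex.arg (-Complex.I * w) * Complex.I + ((Real.pi/2 : ℝ)) * Complex.I := by
    unfold argB; push_cast; ring
  rw [e1, Complex.exp_add, exp_arg_eq _ hIw]
  have h2 : Complex.exp ((Real.pi/2 : ℝ) * Complex.I) = Complex.I := by
    rw [Complex.exp_mul_I]; push_cast
    rw [Complex.cos_pi_div_two, Complex.sin_pi_div_two]; ring
  rw [h2]
  have habs : ‖-Complex.I * w‖ = ‖w‖ := by simp
  rw [habs]
  field_simp
  ring_nf
  rw [Complex.I_sq]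
  ring

lemma continuousAt_argA {w : ℂ} (h : ¬ (w.re = 0 ∧ 0 ≤ w.im)) : ContinuousAt argA w := by
  have hc : ContinuousAt Complex.arg (Complex.I * w) := by
    apply Complex.continuousAt_arg
    push_neg at h
    rcases eq_or_ne w.re 0 with h0 | h0
    · left
      have : (Complex.I * w).re = -w.im := by simp
      rw [this]
      linarith [h h0]
    · right
      have : (Complex.I * w).im = w.re := by simp
      rw [this]; exact h0
  exact ((hc.comp (by fun_prop)).sub continuousAt_const)

lemma continuousAt_argB {w : ℂ} (h : ¬ (w.re = 0 ∧ w.im ≤ 0)) : ContinuousAt argB w := by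
  have hc : ContinuousAt Complex.arg (-Complex.I * w) := by
    apply Complex.continuousAt_arg
    push_neg at h
    rcases eq_or_ne w.re 0 with h0 | h0
    · left
      have : (-Complex.I * w).re = w.im := by simp
      rw [this]
      linarith [h h0]
    · right
      have : (-Complex.I * w).im = -w.re := by simp
      rw [this]; simpa using h0
  exact ((hc.comp (by fun_prop)).add continuousAt_const)

lemma exp_real_mul_I_eq (a b : ℝ)
    (h : Complex.exp (a * Complex.I) = Complex.exp (b * Complex.I)) :
    ∃ k : ℤ, a = b + 2 * Real.pi * k := by
  rw [Complex.exp_eq_exp_iff_exists_int] at h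
  obtain ⟨n, hn⟩ := h
  refine ⟨n, ?_⟩
  have := congrArg Complex.im hn
  simpa [mul_comm] using this

lemma argA_argB_exp (w : ℂ) (h : w ≠ 0) :
    ∃ k : ℤ, argA w = argB w + 2 * Real.pi * k :=
  exp_real_mul_I_eq _ _ (by rw [exp_argA w h, exp_argB w h])

lemma argB_eq_argA_add_two_pi {w : ℂ} (hre : w.re < 0) :
    argB w = argA w + 2 * Real.pi := by
  have h0 : w ≠ 0 := fun h => by simp [h] at hre
  obtain ⟨k, hk⟩ := argA_argB_exp w h0
  -- bounds
  have hA1 : Complex.arg (Complex.I * w) < 0 := by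
    rw [Complex.arg_neg_iff]; simpa using hre
  have hA2 : -Real.pi < Complex.arg (Complex.I * w) := Complex.neg_pi_lt_arg _
  have hB1 : 0 < Complex.arg (-Complex.I * w) := by
    have hnn : 0 ≤ Complex.arg (-Complex.I * w) := by
      rw [Complex.arg_nonneg_iff]
      have : (-Complex.I * w).im = -w.re := by simp
      rw [this]; linarith
    rcases hnn.lt_or_eq with h | h
    · exact h
    · exfalso
      have := Complex.arg_eq_zero_iff.mp h.symm
      have him : (-Complex.I * w).im = -w.re := by simp
      rw [him] at this
      linarith [this.2]
  have hB2 : Complex.arg (-Complex.I * w) ≤ Real.pi := Complex.arg_le_pi _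
  have hpi : (0:ℝ) < Real.pi := Real.pi_pos
  unfold argA argB at hk ⊢
  -- argA ∈ (-3π/2, -π/2), argB ∈ (π/2, 3π/2]; diff = -2πk ∈ [-3π, -π)
  have hk1 : k = -1 := by
    rcases lt_trichotomy k (-1) with h | h | h
    · exfalso
      have hk2 : k ≤ -2 := by omega
      have : (k:ℝ) ≤ -2 := by exact_mod_cast hk2
      nlinarith
    · exact h
    · exfalso
      have hk2 : (0:ℤ) ≤ k := by omega
      have : (0:ℝ) ≤ (k:ℝ) := by exact_mod_cast hk2
      nlinarith
  rw [hk1] at hk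
  push_cast at hk
  linarith

lemma argA_eq_argB {w : ℂ} (hre : 0 < w.re) : argA w = argB w := by
  have h0 : w ≠ 0 := fun h => by simp [h] at hre
  obtain ⟨k, hk⟩ := argA_argB_exp w h0
  have hA1 : 0 < Complex.arg (Complex.I * w) := by
    have hnn : 0 ≤ Complex.arg (Complex.I * w) := by
      rw [Complex.arg_nonneg_iff]; simpa using hre.le
    rcases hnn.lt_or_eq with h | h
    · exact h
    · exfalso
      have := Complex.arg_eq_zero_iff.mp h.symm
      have him : (Complex.I * w).im = w.re := by simp
      rw [him] at this
      linarith [this.2]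
  have hA2 : Complex.arg (Complex.I * w) ≤ Real.pi := Complex.arg_le_pi _
  have hB1 : Complex.arg (-Complex.I * w) < 0 := by
    rw [Complex.arg_neg_iff]
    have : (-Complex.I * w).im = -w.re := by simp
    rw [this]; linarith
  have hB2 : -Real.pi < Complex.arg (-Complex.I * w) := Complex.neg_pi_lt_arg _
  have hpi : (0:ℝ) < Real.pi := Real.pi_pos
  unfold argA argB at hk ⊢
  have hk0 : k = 0 := by
    rcases lt_trichotomy k 0 with h | h | h
    · exfalso
      have hk2 : k ≤ -1 := by omega
      have : (k:ℝ) ≤ -1 := by exact_mod_cast hk2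
      nlinarith
    · exact h
    · exfalso
      have : (1:ℝ) ≤ (k:ℝ) := by exact_mod_cast h
      nlinarith
  rw [hk0] at hk
  push_cast at hk
  linarith

lemma re_div_pos {z w : ℂ} (hz : z ≠ 0) (h : ‖w - z‖ < ‖z‖) :
    0 < (w / z).re := by
  have h1 : ‖w / z - 1‖ < 1 := by
    rw [show w / z - 1 = (w - z) / z by field_simp]
    rw [norm_div, div_lt_one (norm_pos_iff.mpr hz)]
    exact h
  have h2 : (1 - w / z).re ≤ ‖1 - w / z‖ := Complex.re_le_norm _
  have h3 : ‖1 - w / z‖ = ‖w / z - 1‖ := by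
    rw [← norm_neg]; ring_nf
  have h4 : (1 - w / z).re = 1 - (w / z).re := by simp
  linarith [h3 ▸ h2, h1]

lemma exp_sum_tel (n : ℕ) (f : ℕ → ℂ) (hf : ∀ j, f j ≠ 0) (g : ℕ → ℝ)
    (hg : ∀ j, j < n → Complex.exp ((g j : ℝ) * Complex.I)
      = (f (j+1) / ‖f (j+1)‖) / (f j / ‖f j‖)) :
    Complex.exp ((∑ j ∈ Finset.range n, g j : ℝ) * Complex.I)
      = (f n / ‖f n‖) / (f 0 / ‖f 0‖) := by
  have h0 : ∀ j, (‖f j‖ : ℂ) ≠ 0 := fun j => by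
    simpa using norm_ne_zero_iff.mpr (hf j)
  induction n with
  | zero =>
    simp only [Finset.range_zero, Finset.sum_empty]
    rw [div_self (div_ne_zero (hf 0) (h0 0))]
    push_cast
    simp
  | succ m ih =>
    rw [Finset.sum_range_succ]
    have e1 : ((∑ j ∈ Finset.range m, g j) + g m : ℝ) * Complex.I
        = (∑ j ∈ Finset.range m, g j : ℝ) * Complex.I + (g m : ℝ) * Complex.I := by
      push_cast; ring
    rw [e1, Complex.exp_add, ih (fun j hj => hg j (by omega)), hg m (by omega)]
    field_simp [hf, h0]

lemma arg_eq_of_exp_eq_of_close {a Δ : ℝ} (ha1 : -Real.pi < a) (ha2 : a ≤ Real.pi)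
    (hΔ : |Δ| < Real.pi)
    (h : Complex.exp ((a:ℝ) * Complex.I) = Complex.exp ((Δ:ℝ) * Complex.I)) : a = Δ := by
  obtain ⟨k, hk⟩ := exp_real_mul_I_eq a Δ h
  have hpi : (0:ℝ) < Real.pi := Real.pi_pos
  have habs := abs_lt.mp hΔ
  have hk0 : k = 0 := by
    rcases lt_trichotomy k 0 with hh | hh | hh
    · exfalso
      have hk2 : k ≤ -1 := by omega
      have : (k:ℝ) ≤ -1 := by exact_mod_cast hk2
      nlinarith
    · exact hh
    · exfalso
      have : (1:ℝ) ≤ (k:ℝ) := by exact_mod_cast hh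
      nlinarith
  rw [hk0] at hk
  push_cast at hk
  linarith

lemma const_of_steps_two_pi (f : unitInterval → ℝ) (hf : Continuous f)
    (h : ∀ s s' : unitInterval, ∃ k : ℤ, f s - f s' = 2 * Real.pi * k) : f 0 = f 1 := by
  by_contra hne
  have hpi : (0:ℝ) < Real.pi := Real.pi_pos
  have key : ∀ s : unitInterval, f s ≠ f 0 + Real.pi ∧ f s ≠ f 0 - Real.pi := by
    intro s
    obtain ⟨k, hk⟩ := h s 0
    constructor
    · intro hs
      rw [hs] at hk
      rcases le_or_gt k 0 with hh | hh
      · have : (k:ℝ) ≤ 0 := by exact_mod_cast hh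
        nlinarith
      · have : (1:ℝ) ≤ (k:ℝ) := by exact_mod_cast hh
        nlinarith
    · intro hs
      rw [hs] at hk
      rcases le_or_gt k (-1) with hh | hh
      · have : (k:ℝ) ≤ -1 := by exact_mod_cast hh
        nlinarith
      · have hk0 : 0 ≤ k := by omega
        have : (0:ℝ) ≤ (k:ℝ) := by exact_mod_cast hk0
        nlinarith
  have hbig : 2 * Real.pi ≤ |f 1 - f 0| := by
    obtain ⟨k, hk⟩ := h 1 0
    have hkne : k ≠ 0 := by
      intro h0
      rw [h0] at hk
      push_cast at hk
      apply hne
      linarith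
    have : (1:ℝ) ≤ |(k:ℝ)| := by
      have : (1:ℤ) ≤ |k| := Int.one_le_abs hkne
      exact_mod_cast this
    rw [hk, abs_mul]
    have : |(2:ℝ) * Real.pi| = 2 * Real.pi := abs_of_pos (by linarith)
    nlinarith
  rcases lt_or_gt_of_ne hne with hlt | hgt
  · have hmem : f 0 + Real.pi ∈ Set.Icc (f 0) (f 1) := by
      rw [abs_of_pos (by linarith)] at hbig
      constructor <;> linarith
    obtain ⟨s, hs⟩ := intermediate_value_univ (0 : unitInterval) 1 hf hmem
    exact (key s).1 hs
  · have hmem : f 0 - Real.pi ∈ Set.Icc (f 1) (f 0) := by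
      rw [abs_of_neg (by linarith)] at hbig
      constructor <;> linarith
    obtain ⟨s, hs⟩ := intermediate_value_univ (1 : unitInterval) 0 hf hmem
    exact (key s).2 hs

lemma ratio_unit (z0 z1 : ℂ) (h0 : z0 ≠ 0) (h1 : z1 ≠ 0) :
    (z1 / z0) / ((‖z1 / z0‖ : ℝ) : ℂ)
      = (z1 / (‖z1‖ : ℝ)) / (z0 / (‖z0‖ : ℝ)) := by
  have ha0 : ((‖z0‖ : ℝ) : ℂ) ≠ 0 := by simpa using norm_ne_zero_iff.mpr h0
  have ha1 : ((‖z1‖ : ℝ) : ℂ) ≠ 0 := by simpa using norm_ne_zero_iff.mpr h1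
  rw [norm_div]
  push_cast
  field_simp

lemma key_preconnected {D₁ D₂ : Set ℂ} (h₁o : IsOpen D₁) (h₁c : IsConnected D₁)
    (h₂o : IsOpen D₂) (h₂c : IsConnected D₂)
    (hsc : SimplyConnectedSpace ↥(D₁ ∪ D₂)) :
    IsPreconnected (Complex.im '' (D₁ ∩ D₂)) := by
  haveI := hsc
  rw [isPreconnected_iff_ordConnected]
  constructor
  intro a ha b hb c hc
  by_contra hcS
  obtain ⟨p, hp, hpa⟩ := ha
  obtain ⟨q, hq, hqb⟩ := hb
  have hac : a < c := lt_of_le_of_ne hc.1 (fun h => hcS ⟨p, hp, by rw [hpa, h]⟩)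
  have hcb : c < b := lt_of_le_of_ne hc.2 (fun h => hcS ⟨q, hq, by rw [hqb, ← h]⟩)
  have hdisj : ∀ z : ℂ, z.im = c → z ∈ D₁ → z ∈ D₂ → False := fun z hz h1 h2 =>
    hcS ⟨z, ⟨h1, h2⟩, hz⟩
  set A : Set ↥(D₁ ∪ D₂) := Subtype.val ⁻¹' ({z : ℂ | z.im = c} ∩ D₂ᶜ) with hA_def
  set B : Set ↥(D₁ ∪ D₂) := Subtype.val ⁻¹' ({z : ℂ | z.im = c} ∩ D₁ᶜ) with hB_def
  have hAc : IsClosed A :=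
    ((isClosed_eq Complex.continuous_im continuous_const).inter
      h₂o.isClosed_compl).preimage continuous_subtype_val
  have hBc : IsClosed B :=
    ((isClosed_eq Complex.continuous_im continuous_const).inter
      h₁o.isClosed_compl).preimage continuous_subtype_val
  have hABdisj : Disjoint A B := by
    rw [Set.disjoint_left]
    rintro x ⟨hx1, hx2⟩ ⟨hy1, hy2⟩
    rcases x.2 with h | h
    exacts [hy2 h, hx2 h]
  obtain ⟨u, hu0, hu1, hu01⟩ := exists_continuous_zero_one_of_isClosed hAc hBc hABdisj
  set F : ↥(D₁ ∪ D₂) → ℂ := fun x =>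
    ((x.1.im - c : ℝ) : ℂ) + ((2 * u x - 1) * max 0 (1 - |x.1.im - c|) : ℝ) * Complex.I
    with hF_def
  have hFre : ∀ x, (F x).re = x.1.im - c := by intro x; simp [hF_def]
  have hFim : ∀ x, (F x).im = (2 * u x - 1) * max 0 (1 - |x.1.im - c|) := by
    intro x; simp [hF_def]
  have hFcont : Continuous F := by
    apply Continuous.add
    · exact Complex.continuous_ofReal.comp
        ((Complex.continuous_im.comp continuous_subtype_val).sub continuous_const)
    · apply Continuous.mul _ continuous_const
      exact Complex.continuous_ofReal.comp
        (((continuous_const.mul u.continuous).sub continuous_const).mul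
          (continuous_const.max (continuous_const.sub
            ((Complex.continuous_im.comp continuous_subtype_val).sub continuous_const).abs)))
  have huline : ∀ x : ↥(D₁ ∪ D₂), x.1.im = c →
      (x.1 ∈ D₁ ∧ u x = 0) ∨ (x.1 ∈ D₂ ∧ u x = 1) := by
    intro x hx
    rcases x.2 with h | h
    · left
      refine ⟨h, ?_⟩
      have : u x = (0 : ↥(D₁ ∪ D₂) → ℝ) x := hu0 ⟨hx, fun h2 => hdisj x.1 hx h h2⟩
      simpa using this
    · right
      refine ⟨h, ?_⟩
      have : u x = (1 : ↥(D₁ ∪ D₂) → ℝ) x := hu1 ⟨hx, fun h1 => hdisj x.1 hx h1 h⟩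
      simpa using this
  have hFimline : ∀ x : ↥(D₁ ∪ D₂), x.1.im = c →
      ((x.1 ∈ D₁ ∧ (F x).im = -1) ∨ (x.1 ∈ D₂ ∧ (F x).im = 1)) := by
    intro x hx
    have hmax : max (0:ℝ) (1 - |x.1.im - c|) = 1 := by
      rw [hx]; simp
    rcases huline x hx with ⟨h, hu⟩ | ⟨h, hu⟩
    · left; refine ⟨h, ?_⟩; rw [hFim, hu, hmax]; ring
    · right; refine ⟨h, ?_⟩; rw [hFim, hu, hmax]; ring
  have hF0 : ∀ x, F x ≠ 0 := by
    intro x h0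
    have hre := congrArg Complex.re h0
    have him := congrArg Complex.im h0
    rw [hFre] at hre
    simp only [Complex.zero_re, Complex.zero_im] at hre him
    have hx : x.1.im = c := by linarith
    rcases hFimline x hx with ⟨-, h⟩ | ⟨-, h⟩ <;> rw [him] at h <;> norm_num at h
  have hFD1 : ∀ x : ↥(D₁ ∪ D₂), x.1 ∈ D₁ → ¬((F x).re = 0 ∧ 0 ≤ (F x).im) := by
    rintro x hx ⟨h1, h2⟩
    rw [hFre] at h1
    have hxc : x.1.im = c := by linarith
    rcases hFimline x hxc with ⟨-, h⟩ | ⟨h', -⟩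
    · rw [h] at h2; linarith
    · exact hdisj x.1 hxc hx h'
  have hFD2 : ∀ x : ↥(D₁ ∪ D₂), x.1 ∈ D₂ → ¬((F x).re = 0 ∧ (F x).im ≤ 0) := by
    rintro x hx ⟨h1, h2⟩
    rw [hFre] at h1
    have hxc : x.1.im = c := by linarith
    rcases hFimline x hxc with ⟨h', -⟩ | ⟨-, h⟩
    · exact hdisj x.1 hxc h' hx
    · rw [h] at h2; linarith
  set pX : ↥(D₁ ∪ D₂) := ⟨p, Or.inl hp.1⟩ with hpX_def
  set qX : ↥(D₁ ∪ D₂) := ⟨q, Or.inl hq.1⟩ with hqX_def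
  have hpc1 : IsPathConnected D₁ := h₁o.isConnected_iff_isPathConnected.mp h₁c
  have hpc2 : IsPathConnected D₂ := h₂o.isConnected_iff_isPathConnected.mp h₂c
  have hJ1 : JoinedIn D₁ p q := hpc1.joinedIn p hp.1 q hq.1
  have hJ2 : JoinedIn D₂ p q := hpc2.joinedIn p hp.2 q hq.2
  have hγ₁ := hJ1.somePath_mem
  have hγ₂ := hJ2.somePath_mem
  set α : Path pX qX :=
    { toFun := fun t => ⟨hJ1.somePath t, Or.inl (hγ₁ t)⟩
      continuous_toFun := hJ1.somePath.continuous.subtype_mk _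
      source' := Subtype.ext hJ1.somePath.source
      target' := Subtype.ext hJ1.somePath.target } with hα_def
  set β : Path pX qX :=
    { toFun := fun t => ⟨hJ2.somePath t, Or.inr (hγ₂ t)⟩
      continuous_toFun := hJ2.somePath.continuous.subtype_mk _
      source' := Subtype.ext hJ2.somePath.source
      target' := Subtype.ext hJ2.somePath.target } with hβ_def
  obtain ⟨H⟩ := SimplyConnectedSpace.paths_homotopic α β
  set G : (unitInterval × unitInterval) → ℂ := fun st => F (H st) with hG_def
  have hGcont : Continuous G := hFcont.comp H.continuous
  have hG0 : ∀ st, G st ≠ 0 := fun st => hF0 _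
  obtain ⟨st₀, -, hst₀⟩ := isCompact_univ.exists_isMinOn Set.univ_nonempty
    ((continuous_norm.comp hGcont).continuousOn)
  set m : ℝ := ‖G st₀‖ with hm_def
  have hmpos : 0 < m := norm_pos_iff.mpr (hG0 st₀)
  have hm : ∀ st, m ≤ ‖G st‖ := fun st => (isMinOn_iff.mp hst₀) st (Set.mem_univ st)
  obtain ⟨δ, hδpos, hδ⟩ := Metric.uniformContinuous_iff.mp
    (CompactSpace.uniformContinuous_of_continuous hGcont) m hmpos
  set φ₁ : unitInterval → ℝ := fun t => argA (F (α t)) with hφ₁_def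
  set φ₂ : unitInterval → ℝ := fun t => argB (F (β t)) with hφ₂_def
  have hφ₁cont : Continuous φ₁ := by
    rw [continuous_iff_continuousAt]
    intro t
    have h1 : ContinuousAt (F ∘ α) t := (hFcont.comp α.continuous).continuousAt
    exact ContinuousAt.comp (g := argA) (f := F ∘ ⇑α) (x := t)
      (continuousAt_argA (hFD1 (α t) (hγ₁ t))) h1
  have hφ₂cont : Continuous φ₂ := by
    rw [continuous_iff_continuousAt]
    intro t
    have h1 : ContinuousAt (F ∘ β) t := (hFcont.comp β.continuous).continuousAt
    exact ContinuousAt.comp (g := argB) (f := F ∘ ⇑β) (x := t)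
      (continuousAt_argB (hFD2 (β t) (hγ₂ t))) h1
  obtain ⟨δ₁, hδ₁pos, hδ₁⟩ := Metric.uniformContinuous_iff.mp
    (CompactSpace.uniformContinuous_of_continuous hφ₁cont) Real.pi Real.pi_pos
  obtain ⟨δ₂, hδ₂pos, hδ₂⟩ := Metric.uniformContinuous_iff.mp
    (CompactSpace.uniformContinuous_of_continuous hφ₂cont) Real.pi Real.pi_pos
  have hεpos : 0 < min δ (min δ₁ δ₂) := lt_min hδpos (lt_min hδ₁pos hδ₂pos)
  obtain ⟨n0, hn0⟩ := exists_nat_one_div_lt hεpos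
  set N : ℕ := n0 + 1 with hN_def
  have hNR : (0:ℝ) < N := by positivity
  have hsmall : 1 / (N:ℝ) < min δ (min δ₁ δ₂) := by
    rw [hN_def]
    push_cast
    exact hn0
  set tpt : ℕ → unitInterval := fun j => Set.projIcc 0 1 zero_le_one ((j:ℝ) / N) with htpt_def
  have htco : ∀ j, j ≤ N → ((tpt j : ℝ)) = (j:ℝ)/N := by
    intro j hj
    have hmem : (j:ℝ)/N ∈ Set.Icc (0:ℝ) 1 := ⟨by positivity, by
      rw [div_le_one hNR]; exact_mod_cast hj⟩
    rw [htpt_def]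
    simp [Set.projIcc_of_mem zero_le_one hmem]
  have htpt0 : tpt 0 = 0 := by
    apply Subtype.ext; rw [htco 0 (by omega)]; simp
  have htptN : tpt N = 1 := by
    apply Subtype.ext; rw [htco N le_rfl]; field_simp; simp
  have hdist_t : ∀ j, j < N → dist (tpt (j+1)) (tpt j) = 1 / (N:ℝ) := by
    intro j hj
    rw [Subtype.dist_eq, htco (j+1) (by omega), htco j (by omega), Real.dist_eq]
    push_cast
    rw [div_sub_div_same]
    ring_nf
    rw [abs_of_pos (by positivity)]
  have hstep : ∀ (s : unitInterval) (j : ℕ), j < N →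
      ‖G (s, tpt (j+1)) - G (s, tpt j)‖ < m := by
    intro s j hj
    have hd : dist ((s, tpt (j+1)) : unitInterval × unitInterval) (s, tpt j) < δ := by
      rw [Prod.dist_eq]
      simp only [dist_self]
      rw [max_eq_right dist_nonneg, hdist_t j hj]
      exact hsmall.trans_le (min_le_left _ _)
    have := hδ hd
    rwa [Complex.dist_eq] at this
  have hratio : ∀ (s : unitInterval) (j : ℕ), j < N →
      0 < (G (s, tpt (j+1)) / G (s, tpt j)).re := fun s j hj =>
    re_div_pos (hG0 _) (lt_of_lt_of_le (hstep s j hj) (hm _))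
  set w : unitInterval → ℝ :=
    fun s => ∑ j ∈ Finset.range N, Complex.arg (G (s, tpt (j+1)) / G (s, tpt j)) with hw_def
  have hwcont : Continuous w := by
    apply continuous_finset_sum
    intro j hj
    rw [continuous_iff_continuousAt]
    intro s
    have hj' : j < N := Finset.mem_range.mp hj
    have hc1 : Continuous fun s : unitInterval => G (s, tpt (j+1)) :=
      hGcont.comp (continuous_id.prodMk continuous_const)
    have hc0 : Continuous fun s : unitInterval => G (s, tpt j) :=
      hGcont.comp (continuous_id.prodMk continuous_const)
    have hdiv : ContinuousAt (fun s : unitInterval => G (s, tpt (j+1)) / G (s, tpt j)) s :=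
      (hc1.div hc0 (fun s => hG0 _)).continuousAt
    exact ContinuousAt.comp (g := Complex.arg)
      (f := fun s : unitInterval => G (s, tpt (j+1)) / G (s, tpt j)) (x := s)
      (Complex.continuousAt_arg (Or.inl (hratio s j hj'))) hdiv
  have hGs0 : ∀ s, G (s, tpt 0) = F pX := by
    intro s
    rw [htpt0]
    show F (H (s, 0)) = F pX
    rw [H.source]
  have hGs1 : ∀ s, G (s, tpt N) = F qX := by
    intro s
    rw [htptN]
    show F (H (s, 1)) = F qX
    rw [H.target]
  have hexp : ∀ s, Complex.exp ((w s : ℝ) * Complex.I)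
      = (F qX / (‖F qX‖ : ℝ)) / (F pX / (‖F pX‖ : ℝ)) := by
    intro s
    have hg : ∀ j, j < N →
        Complex.exp ((Complex.arg (G (s, tpt (j+1)) / G (s, tpt j)) : ℝ) * Complex.I)
        = (G (s, tpt (j+1)) / (‖G (s, tpt (j+1))‖ : ℝ))
          / (G (s, tpt j) / (‖G (s, tpt j)‖ : ℝ)) := by
      intro j hj
      rw [exp_arg_eq _ (div_ne_zero (hG0 _) (hG0 _))]
      exact ratio_unit _ _ (hG0 _) (hG0 _)
    have htel := exp_sum_tel N (fun j => G (s, tpt j)) (fun j => hG0 _) _ hg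
    show Complex.exp (((∑ j ∈ Finset.range N,
        Complex.arg (G (s, tpt (j+1)) / G (s, tpt j))) : ℝ) * Complex.I)
      = (F qX / (‖F qX‖ : ℝ)) / (F pX / (‖F pX‖ : ℝ))
    simpa only [hGs1 s, hGs0 s] using htel
  have h2π : ∀ s s' : unitInterval, ∃ k : ℤ, w s - w s' = 2 * Real.pi * k := by
    intro s s'
    obtain ⟨k, hk⟩ := exp_real_mul_I_eq (w s) (w s') (by rw [hexp s, hexp s'])
    exact ⟨k, by linarith⟩
  have hα_apply : ∀ t, H (0, t) = α t := fun t => H.toHomotopy.apply_zero t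
  have hβ_apply : ∀ t, H (1, t) = β t := fun t => H.toHomotopy.apply_one t
  have hterm0 : ∀ j, j < N → Complex.arg (G (0, tpt (j+1)) / G (0, tpt j))
      = φ₁ (tpt (j+1)) - φ₁ (tpt j) := by
    intro j hj
    have hGα : ∀ t, G (0, t) = F (α t) := fun t => by
      show F (H (0, t)) = F (α t)
      rw [hα_apply]
    apply arg_eq_of_exp_eq_of_close (Complex.neg_pi_lt_arg _) (Complex.arg_le_pi _)
    · have hd : dist (tpt (j+1)) (tpt j) < δ₁ := by
        rw [hdist_t j hj]
        exact hsmall.trans_le ((min_le_right _ _).trans (min_le_left _ _))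
      have := hδ₁ hd
      rwa [Real.dist_eq] at this
    · rw [exp_arg_eq _ (div_ne_zero (hG0 _) (hG0 _)), ratio_unit _ _ (hG0 _) (hG0 _)]
      have hsub : ((φ₁ (tpt (j+1)) - φ₁ (tpt j) : ℝ) : ℂ) * Complex.I
          = (φ₁ (tpt (j+1)) : ℝ) * Complex.I - (φ₁ (tpt j) : ℝ) * Complex.I := by
        push_cast; ring
      rw [hsub, Complex.exp_sub, hφ₁_def]
      simp only []
      rw [exp_argA _ (hF0 _), exp_argA _ (hF0 _), hGα, hGα]
  have hterm1 : ∀ j, j < N → Complex.arg (G (1, tpt (j+1)) / G (1, tpt j))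
      = φ₂ (tpt (j+1)) - φ₂ (tpt j) := by
    intro j hj
    have hGβ : ∀ t, G (1, t) = F (β t) := fun t => by
      show F (H (1, t)) = F (β t)
      rw [hβ_apply]
    apply arg_eq_of_exp_eq_of_close (Complex.neg_pi_lt_arg _) (Complex.arg_le_pi _)
    · have hd : dist (tpt (j+1)) (tpt j) < δ₂ := by
        rw [hdist_t j hj]
        exact hsmall.trans_le ((min_le_right _ _).trans (min_le_right _ _))
      have := hδ₂ hd
      rwa [Real.dist_eq] at this
    · rw [exp_arg_eq _ (div_ne_zero (hG0 _) (hG0 _)), ratio_unit _ _ (hG0 _) (hG0 _)]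
      have hsub : ((φ₂ (tpt (j+1)) - φ₂ (tpt j) : ℝ) : ℂ) * Complex.I
          = (φ₂ (tpt (j+1)) : ℝ) * Complex.I - (φ₂ (tpt j) : ℝ) * Complex.I := by
        push_cast; ring
      rw [hsub, Complex.exp_sub, hφ₂_def]
      simp only []
      rw [exp_argB _ (hF0 _), exp_argB _ (hF0 _), hGβ, hGβ]
  have hw0 : w 0 = φ₁ 1 - φ₁ 0 := by
    rw [hw_def]
    simp only []
    rw [Finset.sum_congr rfl (fun j hj => hterm0 j (Finset.mem_range.mp hj))]
    rw [Finset.sum_range_sub (fun j => φ₁ (tpt j))]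
    rw [htptN, htpt0]
  have hw1 : w 1 = φ₂ 1 - φ₂ 0 := by
    rw [hw_def]
    simp only []
    rw [Finset.sum_congr rfl (fun j hj => hterm1 j (Finset.mem_range.mp hj))]
    rw [Finset.sum_range_sub (fun j => φ₂ (tpt j))]
    rw [htptN, htpt0]
  have hkey : w 0 = w 1 := const_of_steps_two_pi w hwcont h2π
  have hφ₁1 : φ₁ 1 = argA (F qX) := by rw [hφ₁_def]; simp only []; rw [α.target]
  have hφ₁0 : φ₁ 0 = argA (F pX) := by rw [hφ₁_def]; simp only []; rw [α.source]
  have hφ₂1 : φ₂ 1 = argB (F qX) := by rw [hφ₂_def]; simp only []; rw [β.target]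
  have hφ₂0 : φ₂ 0 = argB (F pX) := by rw [hφ₂_def]; simp only []; rw [β.source]
  have hrep : (F pX).re < 0 := by
    rw [hFre]
    show p.im - c < 0
    rw [hpa]; linarith
  have hreq : 0 < (F qX).re := by
    rw [hFre]
    show 0 < q.im - c
    rw [hqb]; linarith
  have e1 : argB (F pX) = argA (F pX) + 2 * Real.pi := argB_eq_argA_add_two_pi hrep
  have e2 : argA (F qX) = argB (F qX) := argA_eq_argB hreq
  rw [hw0, hw1, hφ₁1, hφ₁0, hφ₂1, hφ₂0] at hkey
  have hpi := Real.pi_pos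
  linarith

theorem projections_are_open_intervals
    (D₁ D₂ : Set ℂ) (h₁o : IsOpen D₁) (h₁c : IsConnected D₁)
    (h₂o : IsOpen D₂) (h₂c : IsConnected D₂)
    (hne : (D₁ ∩ D₂).Nonempty)
    (hsc : SimplyConnectedSpace ↥(D₁ ∪ D₂)) :
    ((Py D₁).Nonempty ∧ IsOpen (Py D₁) ∧ IsPreconnected (Py D₁)) ∧
    ((Py D₂).Nonempty ∧ IsOpen (Py D₂) ∧ IsPreconnected (Py D₂)) ∧
    ((Py (D₁ ∩ D₂)).Nonempty ∧ IsOpen (Py (D₁ ∩ D₂)) ∧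
      IsPreconnected (Py (D₁ ∩ D₂))) := by
  have hPy : ∀ D : Set ℂ, Py D = Complex.im '' D := by
    intro D; ext a; simp [Py, Set.mem_image]
  have easy : ∀ D : Set ℂ, IsOpen D → D.Nonempty → IsPreconnected D →
      (Py D).Nonempty ∧ IsOpen (Py D) ∧ IsPreconnected (Py D) := by
    intro D hDo hDn hDp
    rw [hPy]
    exact ⟨hDn.image _, Complex.isOpenMap_im D hDo,
      hDp.image _ Complex.continuous_im.continuousOn⟩
  refine ⟨easy D₁ h₁o h₁c.nonempty h₁c.isPreconnected,
          easy D₂ h₂o h₂c.nonempty h₂c.isPreconnected, ?_, ?_, ?_⟩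
  · rw [hPy]; exact hne.image _
  · rw [hPy]; exact Complex.isOpenMap_im _ (h₁o.inter h₂o)
  · rw [hPy]; exact key_preconnected h₁o h₁c h₂o h₂c hsc
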